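/- Let I(α) = ∫₀^α (√α/√(α−s)) (1+s²)^{-5/4} ds and J(α) = ∫₀^α (√α/√(α−s)) · s (1+s²)^{-5/4} ds for α > 0, and let c₀ = ∫_{-∞}^{∞} (1+t²)^{-5/4} dt. Then I(α) → c₀/2 and J(α) → 2 as α → ∞. -/

import Mathlib

open Real MeasureTheory Filter

open Topology

/-- `I(α) = ∫₀^α (√α/√(α−s)) (1+s²)^{-5/4} ds`. -/
noncomputable def Ifun (α : ℝ) : ℝ :=
  ∫ s in (0:ℝ)..α, (Real.sqrt α / Real.sqrt (α - s)) * (1 + s ^ 2) ^ (-(5:ℝ)/4)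

/-- `J(α) = ∫₀^α (√α/√(α−s)) · s (1+s²)^{-5/4} ds`. -/
noncomputable def Jfun (α : ℝ) : ℝ :=
  ∫ s in (0:ℝ)..α, (Real.sqrt α / Real.sqrt (α - s)) * (s * (1 + s ^ 2) ^ (-(5:ℝ)/4))

/-- `c₀ = ∫_ℝ (1+t²)^{-5/4} dt`. -/
noncomputable def c₀ : ℝ := ∫ t : ℝ, (1 + t ^ 2) ^ (-(5:ℝ)/4)

section Aux

/-- For `0 < α` and `s ≤ α/2`, the ratio `√α/√(α-s)` is at most `√2`. -/
lemma aux_sqrt_ratio_le {α s : ℝ} (hα : 0 < α) (hs : s ≤ α / 2) :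
    Real.sqrt α / Real.sqrt (α - s) ≤ Real.sqrt 2 := by
  have h2 : (0:ℝ) < α / 2 := by linarith
  have hpos : (0:ℝ) < Real.sqrt (α - s) := Real.sqrt_pos.mpr (by linarith)
  rw [div_le_iff₀ hpos]
  have key : Real.sqrt α = Real.sqrt 2 * Real.sqrt (α / 2) := by
    rw [← Real.sqrt_mul (by norm_num : (0:ℝ) ≤ 2) (α / 2)]
    congr 1
    ring
  rw [key]
  have := Real.sqrt_le_sqrt (show α / 2 ≤ α - s by linarith)
  nlinarith [Real.sqrt_nonneg (2:ℝ)]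

lemma aux_ratio_tendsto (s : ℝ) :
    Tendsto (fun α : ℝ => Real.sqrt α / Real.sqrt (α - s)) atTop (𝓝 1) := by
  have h1 : Tendsto (fun α : ℝ => α / (α - s)) atTop (𝓝 1) := by
    have h2 : Tendsto (fun α : ℝ => 1 + s * (α - s)⁻¹) atTop (𝓝 1) := by
      have h3 : Tendsto (fun α : ℝ => (α - s)⁻¹) atTop (𝓝 0) :=
        Tendsto.inv_tendsto_atTop (tendsto_atTop_add_const_right _ (-s) tendsto_id)
      have := (h3.const_mul s).const_add 1
      simpa using this
    refine h2.congr' ?_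
    filter_upwards [eventually_gt_atTop s] with α hα
    have hne : α - s ≠ 0 := by linarith
    field_simp
    ring
  have h2 : Tendsto (fun α : ℝ => Real.sqrt (α / (α - s))) atTop (𝓝 1) := by
    have := (Real.continuous_sqrt.continuousAt (x := (1:ℝ))).tendsto.comp h1
    simpa [Function.comp_def] using this
  refine h2.congr' ?_
  filter_upwards [eventually_gt_atTop (max s 0)] with α hα
  rw [Real.sqrt_div (le_of_lt (lt_of_le_of_lt (le_max_right s 0) hα))]

lemma aux_measurable {α : ℝ} (g : ℝ → ℝ) (hmeas : Measurable g) :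
    Measurable (fun s => Real.sqrt α / Real.sqrt (α - s) * g s) := by
  apply Measurable.mul _ hmeas
  exact Measurable.div measurable_const
    (Real.continuous_sqrt.measurable.comp (measurable_const.sub measurable_id))

/-- Interval integrability of the integrand on subintervals of `[0, α]`. -/
lemma aux_intervalIntegrable (g : ℝ → ℝ) (hmeas : Measurable g)
    (h0 : ∀ s, 0 ≤ s → 0 ≤ g s) (h1 : ∀ s, 0 ≤ s → g s ≤ 1)
    {α a b : ℝ} (hα : 0 < α) (ha : 0 ≤ a) (hb : b ≤ α) (hab : a ≤ b) :
    IntervalIntegrable (fun s => Real.sqrt α / Real.sqrt (α - s) * g s) volume a b := by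
  have base0 : IntervalIntegrable (fun x : ℝ => x ^ (-(1:ℝ)/2)) volume 0 α :=
    intervalIntegral.intervalIntegrable_rpow' (by norm_num)
  have base1 : IntervalIntegrable (fun x : ℝ => (α - x) ^ (-(1:ℝ)/2)) volume a b := by
    have h' := (base0.comp_sub_left α).symm
    simp only [sub_zero, sub_self] at h'
    exact h'.mono_set (by
      rw [Set.uIcc_of_le hab, Set.uIcc_of_le hα.le]
      exact Set.Icc_subset_Icc ha hb)
  have base : IntervalIntegrable (fun x : ℝ => Real.sqrt α * (α - x) ^ (-(1:ℝ)/2)) volume a b :=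
    base1.const_mul _
  refine base.mono_fun ?_ ?_
  · exact (aux_measurable g hmeas).aestronglyMeasurable
  · filter_upwards [MeasureTheory.ae_restrict_mem measurableSet_uIoc] with x hx
    rw [Set.uIoc_of_le hab] at hx
    have hx0 : 0 < x := lt_of_le_of_lt ha hx.1
    have hxα : x ≤ α := le_trans hx.2 hb
    rcases eq_or_lt_of_le hxα with h | h
    · have hz : α - x = 0 := by rw [← h]; ring
      have e1 : Real.sqrt α / Real.sqrt (α - x) * g x = 0 := by
        rw [hz, Real.sqrt_zero, div_zero, zero_mul]
      rw [e1, norm_zero]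
      exact norm_nonneg _
    · have hd : (0:ℝ) < α - x := by linarith
      have hsq : Real.sqrt (α - x) = (α - x) ^ ((1:ℝ)/2) := by
        rw [Real.sqrt_eq_rpow]
      have hpos : (0:ℝ) < Real.sqrt (α - x) := Real.sqrt_pos.mpr hd
      have key : Real.sqrt α / Real.sqrt (α - x) * g x ≤ Real.sqrt α * (α - x) ^ (-(1:ℝ)/2) := by
        have hg1 : g x ≤ 1 := h1 x hx0.le
        have hg0 : 0 ≤ g x := h0 x hx0.le
        have h5 : Real.sqrt α / Real.sqrt (α - x) * g x ≤ Real.sqrt α / Real.sqrt (α - x) * 1 := by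
          apply mul_le_mul_of_nonneg_left hg1 (by positivity)
        rw [mul_one] at h5
        refine h5.trans (le_of_eq ?_)
        rw [(show -(1:ℝ)/2 = -((1:ℝ)/2) by norm_num), Real.rpow_neg hd.le,
          div_eq_mul_inv, hsq]
      have hnn : 0 ≤ Real.sqrt α / Real.sqrt (α - x) * g x := by
        have := h0 x hx0.le
        positivity
      have hnn2 : 0 ≤ Real.sqrt α * (α - x) ^ (-(1:ℝ)/2) :=
        mul_nonneg (Real.sqrt_nonneg _) (Real.rpow_nonneg hd.le _)
      rw [Real.norm_eq_abs, Real.norm_eq_abs, abs_of_nonneg hnn, abs_of_nonneg hnn2]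
      exact key

/-- The exact value of `∫_{α/2}^α √α (α-s)^{-1/2} ds`. -/
lemma aux_tail_integral {α : ℝ} (hα : 0 < α) :
    ∫ s in (α/2)..α, Real.sqrt α * (α - s) ^ (-(1:ℝ)/2) = Real.sqrt 2 * α := by
  rw [intervalIntegral.integral_const_mul,
    intervalIntegral.integral_comp_sub_left (fun x : ℝ => x ^ (-(1:ℝ)/2)) α,
    sub_self, (show α - α/2 = α/2 by ring),
    integral_rpow (Or.inl (by norm_num))]
  have h0 : (0:ℝ) ^ (-(1:ℝ)/2 + 1) = 0 := Real.zero_rpow (by norm_num)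
  rw [h0]
  have h1 : (α/2) ^ (-(1:ℝ)/2 + 1) = Real.sqrt α / Real.sqrt 2 := by
    rw [(show -(1:ℝ)/2 + 1 = 1/2 by norm_num), ← Real.sqrt_eq_rpow, Real.sqrt_div hα.le]
  rw [h1]
  have h2 : Real.sqrt α * Real.sqrt α = α := Real.mul_self_sqrt hα.le
  have h3 : Real.sqrt 2 * Real.sqrt 2 = 2 := Real.mul_self_sqrt (by norm_num)
  have h4 : (0:ℝ) < Real.sqrt 2 := by positivity
  field_simp
  nlinarith [Real.sqrt_nonneg α]

lemma aux_helper (a b : ℝ) (hab : a < b) :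
    Tendsto (fun α : ℝ => α ^ a * (α / 2) ^ (-b)) atTop (𝓝 0) := by
  have key : (fun α : ℝ => α ^ a * (α / 2) ^ (-b)) =ᶠ[atTop]
      fun α => 2 ^ b * α ^ (a - b) := by
    filter_upwards [eventually_gt_atTop 0] with α hα
    rw [Real.rpow_neg (by positivity), Real.div_rpow hα.le (by norm_num),
      Real.rpow_sub hα]
    have hb2 : (0:ℝ) < 2 ^ b := Real.rpow_pos_of_pos (by norm_num) b
    have hαb : (0:ℝ) < α ^ b := Real.rpow_pos_of_pos hα b
    field_simp
  refine (Tendsto.congr' key.symm ?_)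
  have h5 := (tendsto_rpow_neg_atTop (show (0:ℝ) < b - a by linarith)).const_mul ((2:ℝ) ^ b)
  simp only [mul_zero] at h5
  refine h5.congr ?_
  intro α
  congr 2
  ring

end Aux

lemma aux_ratio_eq {α x : ℝ} (hx : x ≤ α) :
    Real.sqrt α / Real.sqrt (α - x) = Real.sqrt α * (α - x) ^ (-(1:ℝ)/2) := by
  rcases eq_or_lt_of_le hx with h | h
  · have hz : α - x = 0 := by rw [← h]; ring
    rw [hz, Real.sqrt_zero, div_zero, Real.zero_rpow (by norm_num : -(1:ℝ)/2 ≠ 0), mul_zero]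
  · have hd : (0:ℝ) < α - x := by linarith
    rw [(show -(1:ℝ)/2 = -((1:ℝ)/2) by norm_num), Real.rpow_neg hd.le,
      div_eq_mul_inv, Real.sqrt_eq_rpow (α - x)]

lemma aux_rpow_int {α a b : ℝ} (hα : 0 < α) (ha : 0 ≤ a) (hb : b ≤ α) (hab : a ≤ b) :
    IntervalIntegrable (fun x : ℝ => (α - x) ^ (-(1:ℝ)/2)) volume a b := by
  have base0 : IntervalIntegrable (fun x : ℝ => x ^ (-(1:ℝ)/2)) volume 0 α :=
    intervalIntegral.intervalIntegrable_rpow' (by norm_num)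
  have h' := (base0.comp_sub_left α).symm
  simp only [sub_zero, sub_self] at h'
  exact h'.mono_set (by
    rw [Set.uIcc_of_le hab, Set.uIcc_of_le hα.le]
    exact Set.Icc_subset_Icc ha hb)

/-- The key general convergence lemma. -/
lemma aux_key (g : ℝ → ℝ) (hmeas : Measurable g)
    (h0 : ∀ s, 0 ≤ s → 0 ≤ g s) (h1 : ∀ s, 0 ≤ s → g s ≤ 1)
    (hint : IntegrableOn g (Set.Ioi 0))
    (B : ℝ → ℝ)
    (hBnd : ∀ᶠ α in atTop, ∀ s ∈ Set.Icc (α/2) α, g s ≤ B α)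
    (hB : Tendsto (fun α => α * B α) atTop (𝓝 0)) :
    Tendsto (fun α => ∫ s in (0:ℝ)..α, Real.sqrt α / Real.sqrt (α - s) * g s) atTop
      (𝓝 (∫ s in Set.Ioi (0:ℝ), g s)) := by
  have hmain : Tendsto (fun α => ∫ s in Set.Ioi (0:ℝ),
      (Set.Ioc 0 (α/2)).indicator (fun s => Real.sqrt α / Real.sqrt (α - s) * g s) s) atTop
      (𝓝 (∫ s in Set.Ioi (0:ℝ), g s)) := by
    apply MeasureTheory.tendsto_integral_filter_of_dominated_convergence
      (bound := fun s => Real.sqrt 2 * g s)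
    · filter_upwards with α
      exact ((aux_measurable g hmeas).indicator measurableSet_Ioc).aestronglyMeasurable
    · filter_upwards [eventually_gt_atTop (0:ℝ)] with α hα
      filter_upwards [MeasureTheory.ae_restrict_mem measurableSet_Ioi] with s hs
      by_cases hmem : s ∈ Set.Ioc (0:ℝ) (α/2)
      · rw [Set.indicator_of_mem hmem]
        have hg0 : 0 ≤ g s := h0 s (le_of_lt hs)
        have hr0 : 0 ≤ Real.sqrt α / Real.sqrt (α - s) := by positivity
        rw [Real.norm_eq_abs, abs_of_nonneg (mul_nonneg hr0 hg0)]
        exact mul_le_mul_of_nonneg_right (aux_sqrt_ratio_le hα hmem.2) hg0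
      · rw [Set.indicator_of_notMem hmem, norm_zero]
        exact mul_nonneg (Real.sqrt_nonneg 2) (h0 s (le_of_lt hs))
    · exact hint.const_mul _
    · filter_upwards [MeasureTheory.ae_restrict_mem measurableSet_Ioi] with s hs
      have h1' : Tendsto (fun α : ℝ => Real.sqrt α / Real.sqrt (α - s) * g s) atTop
          (𝓝 (g s)) := by
        have := (aux_ratio_tendsto s).mul_const (g s)
        simpa using this
      refine h1'.congr' ?_
      filter_upwards [eventually_ge_atTop (2*s)] with α hα
      have hmem : s ∈ Set.Ioc (0:ℝ) (α/2) := ⟨hs, by linarith⟩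
      rw [Set.indicator_of_mem hmem]
  have htail : Tendsto (fun α => ∫ s in (α/2)..α, Real.sqrt α / Real.sqrt (α - s) * g s)
      atTop (𝓝 0) := by
    apply squeeze_zero_norm' (a := fun α => Real.sqrt 2 * (α * B α))
    · filter_upwards [eventually_gt_atTop (0:ℝ), hBnd] with α hα hBα
      have hB0 : 0 ≤ B α := le_trans (h0 α hα.le) (hBα α ⟨by linarith, le_refl α⟩)
      have hii : IntervalIntegrable
          (fun s => B α * (Real.sqrt α * (α - s) ^ (-(1:ℝ)/2))) volume (α/2) α :=
        ((aux_rpow_int hα (by linarith) le_rfl (by linarith)).const_mul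
          (Real.sqrt α)).const_mul (B α)
      have hb1 : ‖∫ s in (α/2)..α, Real.sqrt α / Real.sqrt (α - s) * g s‖
          ≤ |∫ s in (α/2)..α, B α * (Real.sqrt α * (α - s) ^ (-(1:ℝ)/2))| := by
        apply intervalIntegral.norm_integral_le_abs_of_norm_le _ hii
        filter_upwards [MeasureTheory.ae_restrict_mem measurableSet_uIoc] with x hx
        rw [Set.uIoc_of_le (by linarith : α/2 ≤ α)] at hx
        have hx0 : 0 < x := lt_of_le_of_lt (by linarith) hx.1
        have hg0 : 0 ≤ g x := h0 x hx0.le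
        have hgB : g x ≤ B α := hBα x ⟨hx.1.le, hx.2⟩
        have hr0 : 0 ≤ Real.sqrt α / Real.sqrt (α - x) := by positivity
        rw [Real.norm_eq_abs, abs_of_nonneg (mul_nonneg hr0 hg0)]
        calc Real.sqrt α / Real.sqrt (α - x) * g x
            ≤ Real.sqrt α / Real.sqrt (α - x) * B α :=
              mul_le_mul_of_nonneg_left hgB hr0
          _ = B α * (Real.sqrt α * (α - x) ^ (-(1:ℝ)/2)) := by
              rw [aux_ratio_eq hx.2]; ring
      have hb2 : |∫ s in (α/2)..α, B α * (Real.sqrt α * (α - s) ^ (-(1:ℝ)/2))|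
          = Real.sqrt 2 * (α * B α) := by
        rw [intervalIntegral.integral_const_mul, aux_tail_integral hα]
        rw [abs_of_nonneg (by positivity)]
        ring
      rw [hb2] at hb1
      exact hb1
    · have := hB.const_mul (Real.sqrt 2)
      simpa using this
  have hsplit : ∀ᶠ α in atTop,
      (∫ s in (0:ℝ)..α, Real.sqrt α / Real.sqrt (α - s) * g s)
      = (∫ s in Set.Ioi (0:ℝ),
          (Set.Ioc 0 (α/2)).indicator (fun s => Real.sqrt α / Real.sqrt (α - s) * g s) s)
        + ∫ s in (α/2)..α, Real.sqrt α / Real.sqrt (α - s) * g s := by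
    filter_upwards [eventually_gt_atTop (0:ℝ)] with α hα
    have i1 : IntervalIntegrable (fun s => Real.sqrt α / Real.sqrt (α - s) * g s)
        volume 0 (α/2) :=
      aux_intervalIntegrable g hmeas h0 h1 hα le_rfl (by linarith) (by linarith)
    have i2 : IntervalIntegrable (fun s => Real.sqrt α / Real.sqrt (α - s) * g s)
        volume (α/2) α :=
      aux_intervalIntegrable g hmeas h0 h1 hα (by linarith) le_rfl (by linarith)
    rw [← intervalIntegral.integral_add_adjacent_intervals i1 i2]
    congr 1
    rw [intervalIntegral.integral_of_le (by linarith : (0:ℝ) ≤ α/2),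
      MeasureTheory.setIntegral_indicator measurableSet_Ioc,
      Set.inter_eq_self_of_subset_right Set.Ioc_subset_Ioi_self]
  have hfinal := hmain.add htail
  rw [add_zero] at hfinal
  exact Tendsto.congr' (by filter_upwards [hsplit] with α h; exact h.symm) hfinal

lemma aux_g1_bound {α s : ℝ} (hα : 0 < α) (hs : α/2 ≤ s) :
    (1 + s^2) ^ (-(5:ℝ)/4) ≤ (α/2) ^ (-(5:ℝ)/2) := by
  have h2 : (0:ℝ) < α/2 := by linarith
  have hs0 : (0:ℝ) < s := lt_of_lt_of_le h2 hs
  have b1 : (1 + s^2) ^ (-(5:ℝ)/4) ≤ (s^2 : ℝ) ^ (-(5:ℝ)/4) :=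
    Real.rpow_le_rpow_of_nonpos (by positivity) (by nlinarith) (by norm_num)
  have b2 : (s^2 : ℝ) ^ (-(5:ℝ)/4) = s ^ (-(5:ℝ)/2) := by
    rw [← Real.rpow_natCast s 2, ← Real.rpow_mul hs0.le]
    norm_num
  have b3 : s ^ (-(5:ℝ)/2) ≤ (α/2) ^ (-(5:ℝ)/2) :=
    Real.rpow_le_rpow_of_nonpos h2 hs (by norm_num)
  calc (1 + s^2) ^ (-(5:ℝ)/4) ≤ (s^2 : ℝ) ^ (-(5:ℝ)/4) := b1
    _ = s ^ (-(5:ℝ)/2) := b2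
    _ ≤ (α/2) ^ (-(5:ℝ)/2) := b3

lemma aux_g1_meas : Measurable (fun s : ℝ => (1 + s^2) ^ (-(5:ℝ)/4)) := by
  fun_prop

lemma aux_g1_le_one {s : ℝ} : (1 + s^2) ^ (-(5:ℝ)/4) ≤ 1 :=
  Real.rpow_le_one_of_one_le_of_nonpos (by nlinarith) (by norm_num)

theorem stmt_12 :
    Tendsto Ifun atTop (nhds (c₀ / 2)) ∧ Tendsto Jfun atTop (nhds 2) := by
  have g1meas := aux_g1_meas
  constructor
  · -- I part
    have h0 : ∀ s : ℝ, 0 ≤ s → 0 ≤ (1 + s^2) ^ (-(5:ℝ)/4) := fun s _ =>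
      Real.rpow_nonneg (by positivity) _
    have h1 : ∀ s : ℝ, 0 ≤ s → (1 + s^2) ^ (-(5:ℝ)/4) ≤ 1 := fun s _ => aux_g1_le_one
    have hint : IntegrableOn (fun s : ℝ => (1 + s^2) ^ (-(5:ℝ)/4)) (Set.Ioi 0) := by
      apply MeasureTheory.Integrable.mono
        (integrable_inv_one_add_sq.integrableOn (s := Set.Ioi 0))
        g1meas.aestronglyMeasurable
      filter_upwards with x
      have hb : (1:ℝ) ≤ 1 + x^2 := by nlinarith
      have hle : (1 + x^2) ^ (-(5:ℝ)/4) ≤ (1 + x^2 : ℝ)⁻¹ := by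
        rw [← Real.rpow_neg_one]
        exact Real.rpow_le_rpow_of_exponent_le hb (by norm_num)
      rw [Real.norm_eq_abs, Real.norm_eq_abs,
        abs_of_nonneg (Real.rpow_nonneg (by positivity) _),
        abs_of_nonneg (by positivity)]
      exact hle
    have hBnd : ∀ᶠ α : ℝ in atTop, ∀ s ∈ Set.Icc (α/2) α,
        (1 + s^2) ^ (-(5:ℝ)/4) ≤ (α/2) ^ (-(5:ℝ)/2) := by
      filter_upwards [eventually_gt_atTop (0:ℝ)] with α hα s hs
      exact aux_g1_bound hα hs.1
    have hBt : Tendsto (fun α : ℝ => α * (α/2) ^ (-(5:ℝ)/2)) atTop (𝓝 0) := by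
      have h := aux_helper 1 (5/2) (by norm_num)
      simp only [Real.rpow_one] at h
      have e : -(5/2 : ℝ) = -(5:ℝ)/2 := by norm_num
      rw [e] at h
      exact h
    have key := aux_key (fun s => (1 + s^2) ^ (-(5:ℝ)/4)) g1meas h0 h1 hint _ hBnd hBt
    have hval : (∫ s in Set.Ioi (0:ℝ), (1 + s^2) ^ (-(5:ℝ)/4)) = c₀ / 2 := by
      have habs := integral_comp_abs
        (f := fun t : ℝ => (1 + t^2) ^ (-(5:ℝ)/4))
      simp only [sq_abs] at habs
      rw [c₀] at *
      rw [show (∫ t : ℝ, (1 + t ^ 2) ^ (-(5:ℝ)/4)) = _ from habs]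
      ring
    rw [hval] at key
    exact key
  · -- J part
    have g2meas : Measurable (fun s : ℝ => s * (1 + s^2) ^ (-(5:ℝ)/4)) :=
      measurable_id.mul g1meas
    have h0 : ∀ s : ℝ, 0 ≤ s → 0 ≤ s * (1 + s^2) ^ (-(5:ℝ)/4) := fun s hs =>
      mul_nonneg hs (Real.rpow_nonneg (by positivity) _)
    have h1 : ∀ s : ℝ, 0 ≤ s → s * (1 + s^2) ^ (-(5:ℝ)/4) ≤ 1 := by
      intro s hs
      have hb : (0:ℝ) < 1 + s^2 := by positivity
      have e1 : s ≤ (1 + s^2) ^ ((1:ℝ)/2) := by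
        rw [← Real.sqrt_eq_rpow]
        calc s = Real.sqrt (s^2) := (Real.sqrt_sq hs).symm
          _ ≤ Real.sqrt (1 + s^2) := Real.sqrt_le_sqrt (by nlinarith)
      have e2 : (1 + s^2 : ℝ) ^ (-(5:ℝ)/4) ≤ (1 + s^2 : ℝ) ^ (-(1:ℝ)/2) :=
        Real.rpow_le_rpow_of_exponent_le (by nlinarith) (by norm_num)
      calc s * (1 + s^2) ^ (-(5:ℝ)/4)
          ≤ (1 + s^2) ^ ((1:ℝ)/2) * (1 + s^2) ^ (-(1:ℝ)/2) := by
            apply mul_le_mul e1 e2 (Real.rpow_nonneg hb.le _) (Real.rpow_nonneg hb.le _)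
        _ = 1 := by
            rw [← Real.rpow_add hb]
            norm_num
    have hF : ∀ x : ℝ, HasDerivAt (fun s : ℝ => -2 * (1 + s^2) ^ (-(1:ℝ)/4))
        (x * (1 + x^2) ^ (-(5:ℝ)/4)) x := by
      intro x
      have hx : (1:ℝ) + x^2 ≠ 0 := by positivity
      have d1 : HasDerivAt (fun s : ℝ => 1 + s^2) (2*x) x := by
        simpa using ((hasDerivAt_pow 2 x).const_add 1)
      have d2 := (d1.rpow_const (p := -(1:ℝ)/4) (Or.inl hx)).const_mul (-2 : ℝ)
      refine d2.congr_deriv ?_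
      rw [show -(1:ℝ)/4 - 1 = -(5:ℝ)/4 by norm_num]
      ring
    have hcont : ContinuousWithinAt (fun s : ℝ => -2 * (1 + s^2) ^ (-(1:ℝ)/4))
        (Set.Ici 0) 0 := (hF 0).continuousAt.continuousWithinAt
    have hpos : ∀ x ∈ Set.Ioi (0:ℝ), 0 ≤ x * (1 + x^2) ^ (-(5:ℝ)/4) := fun x hx =>
      mul_nonneg (le_of_lt hx) (Real.rpow_nonneg (by positivity) _)
    have htend : Tendsto (fun s : ℝ => -2 * (1 + s^2) ^ (-(1:ℝ)/4)) atTop (𝓝 0) := by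
      have t1 : Tendsto (fun s : ℝ => 1 + s^2) atTop atTop :=
        tendsto_atTop_add_const_left _ 1 (tendsto_pow_atTop (by norm_num))
      have t2 := (tendsto_rpow_neg_atTop (show (0:ℝ) < 1/4 by norm_num)).comp t1
      have t3 := t2.const_mul (-2 : ℝ)
      simp only [mul_zero] at t3
      refine t3.congr fun s => ?_
      simp only [Function.comp]
      rw [show -(1/4 : ℝ) = -(1:ℝ)/4 by norm_num]
    have hint2 : IntegrableOn (fun x : ℝ => x * (1 + x^2) ^ (-(5:ℝ)/4)) (Set.Ioi 0) :=
      integrableOn_Ioi_deriv_of_nonneg hcont (fun x _ => hF x) hpos htend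
    have hval2 : (∫ x in Set.Ioi (0:ℝ), x * (1 + x^2) ^ (-(5:ℝ)/4)) = 2 := by
      rw [integral_Ioi_of_hasDerivAt_of_nonneg hcont (fun x _ => hF x) hpos htend]
      norm_num
    have hBnd : ∀ᶠ α : ℝ in atTop, ∀ s ∈ Set.Icc (α/2) α,
        s * (1 + s^2) ^ (-(5:ℝ)/4) ≤ α * (α/2) ^ (-(5:ℝ)/2) := by
      filter_upwards [eventually_gt_atTop (0:ℝ)] with α hα s hs
      have h2 : (0:ℝ) < α/2 := by linarith
      exact mul_le_mul hs.2 (aux_g1_bound hα hs.1)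
        (Real.rpow_nonneg (by positivity) _) hα.le
    have hBt : Tendsto (fun α : ℝ => α * (α * (α/2) ^ (-(5:ℝ)/2))) atTop (𝓝 0) := by
      have h := aux_helper 2 (5/2) (by norm_num)
      have e : -(5/2 : ℝ) = -(5:ℝ)/2 := by norm_num
      rw [e] at h
      refine h.congr fun α => ?_
      rw [Real.rpow_two]
      ring
    have key := aux_key (fun s => s * (1 + s^2) ^ (-(5:ℝ)/4)) g2meas h0 h1 hint2 _ hBnd hBt
    rw [hval2] at key
    exact key
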